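/- Let G be a finite simple graph on n vertices with adjacency matrix A having eigenvalues λ₁ ≥ … ≥ λₙ and det A ≠ 0. If |λᵢ| ≤ 7.11 for all i, then the energy E(G) = Σ|λᵢ| satisfies E(G) ≥ (10n)/11 + (2m)/11, where m is the number of edges. -/

import Mathlib

open Finset Matrix

private lemma stmt_8_logbd {s : ℝ} (hs : 0 < s) : Real.log s ≤ s / Real.exp 1 := by
  have h := Real.log_le_sub_one_of_pos (show 0 < s / Real.exp 1 by positivity)
  rw [Real.log_div (ne_of_gt hs) (Real.exp_ne_zero 1), Real.log_exp] at h
  linarith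

private lemma stmt_8_key (t : ℝ) (h0 : 0 < t) (h7 : t ≤ 7.11) :
    (10 + t^2)/11 + 9/11 * Real.log t ≤ t := by
  set s := Real.sqrt t with hsdef
  have hs0 : 0 < s := Real.sqrt_pos.mpr h0
  have hst : s^2 = t := Real.sq_sqrt h0.le
  have hlt : Real.log t = 2 * Real.log s := by
    rw [← hst, Real.log_pow]; push_cast; ring
  rcases le_or_gt t 4 with h4 | h4
  · have hs2 : s ≤ 2 := by nlinarith
    have hlog : Real.log s ≤ s - 1 := Real.log_le_sub_one_of_pos hs0
    rw [hlt]
    nlinarith [mul_nonneg (mul_nonneg (sq_nonneg (s-1)) (by linarith : (0:ℝ) ≤ 2 - s))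
      (by linarith : (0:ℝ) ≤ s + 4)]
  · have hs2 : 2 ≤ s := by nlinarith
    have hs7 : s^2 ≤ 7.11 := by linarith
    have hlog : Real.log s ≤ s / Real.exp 1 := stmt_8_logbd hs0
    have hE : (2.7182818283 : ℝ) < Real.exp 1 := Real.exp_one_gt_d9
    have hpos : (0:ℝ) ≤ 11 * s^2 - 10 - s^4 := by nlinarith
    have hkey : 18 * s ≤ Real.exp 1 * (11 * s^2 - 10 - s^4) := by
      have h1 : (2.7182818283 : ℝ) * (11 * s^2 - 10 - s^4) ≤
          Real.exp 1 * (11 * s^2 - 10 - s^4) := by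
        apply mul_le_mul_of_nonneg_right hE.le hpos
      have h2 : 18 * s ≤ (2.7182818283 : ℝ) * (11 * s^2 - 10 - s^4) := by
        nlinarith [sq_nonneg (s - 2.6665), mul_nonneg (by nlinarith : (0:ℝ) ≤ s^2 - 4)
          (by linarith : (0:ℝ) ≤ 7.11 - s^2)]
      linarith
    rw [hlt]
    have he : 0 < Real.exp 1 := Real.exp_pos 1
    have h9 : 9 * (2 * Real.log s) ≤ 18 * (s / Real.exp 1) := by linarith [hlog]
    have h18 : 18 * (s / Real.exp 1) ≤ 11 * s^2 - 10 - s^4 := by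
      rw [mul_div_assoc', div_le_iff₀ he]
      nlinarith [hkey]
    nlinarith

theorem stmt_8 {V : Type*} [Fintype V] [DecidableEq V]
    (G : SimpleGraph V) [DecidableRel G.Adj]
    (hA : (G.adjMatrix ℝ).IsHermitian)
    (hdet : (G.adjMatrix ℝ).det ≠ 0)
    (hbd : ∀ i, |hA.eigenvalues i| ≤ 7.11) :
    ∑ i, |hA.eigenvalues i| ≥
      10 * (Fintype.card V : ℝ) / 11 + 2 * (G.edgeFinset.card : ℝ) / 11 := by
  set A := G.adjMatrix ℝ with hAdef
  -- eigenvalues are nonzero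
  have hprod : A.det = ∏ i, hA.eigenvalues i := by
    rw [hA.det_eq_prod_eigenvalues]; norm_num
  have hnz : ∀ i, hA.eigenvalues i ≠ 0 := by
    intro i hi
    apply hdet
    rw [hprod]
    exact Finset.prod_eq_zero (Finset.mem_univ i) hi
  -- |det| ≥ 1
  have hmap : (Int.castRingHom ℝ).mapMatrix (G.adjMatrix ℤ) = G.adjMatrix ℝ := by
    ext i j
    simp [SimpleGraph.adjMatrix_apply, apply_ite (Int.cast : ℤ → ℝ)]
  have hdetZ : A.det = ((G.adjMatrix ℤ).det : ℝ) := by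
    rw [hAdef, ← hmap, ← RingHom.map_det]; rfl
  have hdet1 : 1 ≤ |A.det| := by
    rw [hdetZ] at hdet ⊢
    have h2 : (G.adjMatrix ℤ).det ≠ 0 := by exact_mod_cast hdet
    rw [← Int.cast_abs]
    exact_mod_cast Int.one_le_abs h2
  -- sum of logs of |eigenvalues| is nonneg
  have hlogsum : 0 ≤ ∑ i, Real.log |hA.eigenvalues i| := by
    have h1 : ∑ i, Real.log |hA.eigenvalues i| = Real.log (∏ i, |hA.eigenvalues i|) := by
      rw [Real.log_prod]
      intro i _
      exact abs_ne_zero.mpr (hnz i)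
    rw [h1, ← Finset.abs_prod, ← hprod]
    exact Real.log_nonneg hdet1
  -- trace of A^2
  have htr : (A * A).trace = ∑ i, hA.eigenvalues i ^ 2 := by
    set U : Matrix V V ℝ := (hA.eigenvectorUnitary : Matrix V V ℝ) with hUdef
    set D : Matrix V V ℝ := diagonal (RCLike.ofReal ∘ hA.eigenvalues) with hD
    have hU : star U * U = 1 := Matrix.mem_unitaryGroup_iff'.mp hA.eigenvectorUnitary.2
    have h1 : A * A = U * (D * D) * star U := by
      conv_lhs => rw [hA.spectral_theorem]
      simp only [Unitary.conjStarAlgAut_apply, ← hUdef, ← hD, Matrix.mul_assoc, ← Matrix.mul_assoc (star U) U, hU,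
        Matrix.one_mul]
    rw [h1, Matrix.trace_mul_cycle, ← Matrix.mul_assoc, hU, Matrix.one_mul, hD,
      Matrix.diagonal_mul_diagonal, Matrix.trace_diagonal]
    simp [sq]
  have htr2 : (A * A).trace = 2 * (G.edgeFinset.card : ℝ) := by
    rw [hAdef, Matrix.trace]
    simp only [Matrix.diag_apply, SimpleGraph.adjMatrix_mul_self_apply_self]
    rw [← Nat.cast_sum, SimpleGraph.sum_degrees_eq_twice_card_edges]
    push_cast; ring
  have hsumsq : ∑ i, hA.eigenvalues i ^ 2 = 2 * (G.edgeFinset.card : ℝ) := by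
    rw [← htr, htr2]
  -- pointwise bound
  have hpt : ∀ i, (10 + hA.eigenvalues i ^ 2)/11 + 9/11 * Real.log |hA.eigenvalues i|
      ≤ |hA.eigenvalues i| := by
    intro i
    have h0 : 0 < |hA.eigenvalues i| := abs_pos.mpr (hnz i)
    have := stmt_8_key |hA.eigenvalues i| h0 (hbd i)
    calc (10 + hA.eigenvalues i ^ 2)/11 + 9/11 * Real.log |hA.eigenvalues i|
        = (10 + |hA.eigenvalues i| ^ 2)/11 + 9/11 * Real.log |hA.eigenvalues i| := by
          rw [sq_abs]
      _ ≤ |hA.eigenvalues i| := this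
  -- sum up
  have hsum : ∑ i, ((10 + hA.eigenvalues i ^ 2)/11 + 9/11 * Real.log |hA.eigenvalues i|)
      ≤ ∑ i, |hA.eigenvalues i| :=
    Finset.sum_le_sum fun i _ => hpt i
  have hexpand : ∑ i, ((10 + hA.eigenvalues i ^ 2)/11 + 9/11 * Real.log |hA.eigenvalues i|)
      = 10 * (Fintype.card V : ℝ) / 11 + (∑ i, hA.eigenvalues i ^ 2) / 11
        + 9/11 * ∑ i, Real.log |hA.eigenvalues i| := by
    rw [Finset.sum_add_distrib, ← Finset.mul_sum]
    congr 1
    simp only [add_div]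
    rw [Finset.sum_add_distrib, Finset.sum_const, Finset.card_univ, nsmul_eq_mul,
      ← Finset.sum_div]
    ring
  rw [ge_iff_le]
  calc 10 * (Fintype.card V : ℝ) / 11 + 2 * (G.edgeFinset.card : ℝ) / 11
      ≤ 10 * (Fintype.card V : ℝ) / 11 + (∑ i, hA.eigenvalues i ^ 2) / 11
        + 9/11 * ∑ i, Real.log |hA.eigenvalues i| := by
        rw [hsumsq]; linarith
    _ = ∑ i, ((10 + hA.eigenvalues i ^ 2)/11 + 9/11 * Real.log |hA.eigenvalues i|) :=
        hexpand.symm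
    _ ≤ ∑ i, |hA.eigenvalues i| := hsum
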